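/- Fix a, c ∈ (0, π). Let I ⊆ (0, π) be an open interval and α, γ : I → (0, π) functions such that for every b ∈ I: cos a = cos b · cos c + sin b · sin c · cos(α(b)), and cos c = cos a · cos b + sin a · sin b · cos(γ(b)). Then α is differentiable on I with α′(b) = − cos(γ(b)) / (sin(γ(b)) · sin b) for every b ∈ I. -/

import Mathlib

open Real Set

/-- Spherical trigonometry: with the sides `a, c` fixed and the angles `α`, `γ`
determined by the cosine laws as functions of the side `b`, one has
`∂α/∂b = - cos γ / (sin γ · sin b)`. -/
theorem stmt_10 (a c : ℝ) (ha : a ∈ Ioo 0 π) (hc : c ∈ Ioo 0 π)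
    (lo hi : ℝ) (hI : Ioo lo hi ⊆ Ioo 0 π)
    (α γ : ℝ → ℝ)
    (hα : ∀ b ∈ Ioo lo hi, α b ∈ Ioo 0 π)
    (hγ : ∀ b ∈ Ioo lo hi, γ b ∈ Ioo 0 π)
    (law1 : ∀ b ∈ Ioo lo hi, cos a = cos b * cos c + sin b * sin c * cos (α b))
    (law2 : ∀ b ∈ Ioo lo hi, cos c = cos a * cos b + sin a * sin b * cos (γ b)) :
    ∀ b ∈ Ioo lo hi, HasDerivAt α (-(cos (γ b)) / (sin (γ b) * sin b)) b := by
  intro b hb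
  obtain ⟨hb0, hbπ⟩ := hI hb
  have hsa : 0 < sin a := sin_pos_of_pos_of_lt_pi ha.1 ha.2
  have hsc : 0 < sin c := sin_pos_of_pos_of_lt_pi hc.1 hc.2
  have hsb : 0 < sin b := sin_pos_of_pos_of_lt_pi hb0 hbπ
  have hsα : 0 < sin (α b) := sin_pos_of_pos_of_lt_pi (hα b hb).1 (hα b hb).2
  have hsγ : 0 < sin (γ b) := sin_pos_of_pos_of_lt_pi (hγ b hb).1 (hγ b hb).2
  set f : ℝ → ℝ := fun x => (cos a - cos x * cos c) / (sin x * sin c) with hf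
  have hfeq : ∀ x ∈ Ioo lo hi, f x = cos (α x) := by
    intro x hx
    obtain ⟨hx0, hxπ⟩ := hI hx
    have hsx : 0 < sin x := sin_pos_of_pos_of_lt_pi hx0 hxπ
    have h1 := law1 x hx
    rw [hf]
    field_simp
    linarith
  have hfb : f b = cos (α b) := hfeq b hb
  have hpyα := sin_sq_add_cos_sq (α b)
  have hcos2 : cos (α b) ^ 2 < 1 := by nlinarith
  have hne1 : f b ≠ 1 := by rw [hfb]; nlinarith
  have hnem1 : f b ≠ -1 := by rw [hfb]; nlinarith
  -- derivative of f
  have hd1 : HasDerivAt (fun x : ℝ => cos a - cos x * cos c)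
      (-(-sin b * cos c)) b :=
    ((Real.hasDerivAt_cos b).mul_const (cos c)).const_sub (cos a)
  have hden : sin b * sin c ≠ 0 := by positivity
  have hd2 : HasDerivAt (fun x : ℝ => sin x * sin c) (cos b * sin c) b :=
    (Real.hasDerivAt_sin b).mul_const (sin c)
  have hdf : HasDerivAt f
      (((-(-sin b * cos c)) * (sin b * sin c) -
        (cos a - cos b * cos c) * (cos b * sin c)) / (sin b * sin c) ^ 2) b :=
    hd1.div hd2 hden
  -- compose with arccos
  have harccos := (Real.hasDerivAt_arccos hnem1 hne1).comp b hdf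
  -- arccos ∘ f agrees with α near b
  have hev : (fun x => arccos (f x)) =ᶠ[nhds b] α := by
    filter_upwards [isOpen_Ioo.mem_nhds hb] with x hx
    rw [hfeq x hx, Real.arccos_cos (hα x hx).1.le (hα x hx).2.le]
  have hder : HasDerivAt α
      (-(1 / Real.sqrt (1 - f b ^ 2)) *
        (((-(-sin b * cos c)) * (sin b * sin c) -
          (cos a - cos b * cos c) * (cos b * sin c)) / (sin b * sin c) ^ 2)) b :=
    harccos.congr_of_eventuallyEq hev.symm
  -- simplify sqrt
  have hsqrt : Real.sqrt (1 - f b ^ 2) = sin (α b) := by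
    rw [hfb]
    have h : 1 - cos (α b) ^ 2 = sin (α b) ^ 2 := by linarith
    rw [h, Real.sqrt_sq hsα.le]
  rw [hsqrt] at hder
  have h1 := law1 b hb
  have h2 := law2 b hb
  have hpa := sin_sq_add_cos_sq a
  have hpb := sin_sq_add_cos_sq b
  have hpc := sin_sq_add_cos_sq c
  have hpγ := sin_sq_add_cos_sq (γ b)
  -- law of sines: sin α * sin c = sin γ * sin a
  have hsine : sin (α b) * sin c = sin (γ b) * sin a := by
    have hA : (sin (α b) * sin c * sin b) ^ 2
        = (sin b * sin c) ^ 2 - (cos a - cos b * cos c) ^ 2 := by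
      linear_combination (sin b * sin c) ^ 2 * hpyα +
        (cos a - cos b * cos c + sin b * sin c * cos (α b)) * h1
    have hB : (sin (γ b) * sin a * sin b) ^ 2
        = (sin a * sin b) ^ 2 - (cos c - cos a * cos b) ^ 2 := by
      linear_combination (sin a * sin b) ^ 2 * hpγ +
        (cos c - cos a * cos b + sin a * sin b * cos (γ b)) * h2
    have hC : (sin b * sin c) ^ 2 - (cos a - cos b * cos c) ^ 2
        = (sin a * sin b) ^ 2 - (cos c - cos a * cos b) ^ 2 := by
      linear_combination sin b ^ 2 * hpc - sin b ^ 2 * hpa -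
        (cos c ^ 2 - cos a ^ 2) * hpb
    have hsq : (sin (α b) * sin c * sin b) ^ 2 = (sin (γ b) * sin a * sin b) ^ 2 := by
      rw [hA, hC, ← hB]
    have := (sq_eq_sq₀ (by positivity) (by positivity)).mp hsq
    have hb2 : sin b ≠ 0 := ne_of_gt hsb
    exact mul_right_cancel₀ hb2 this
  -- identify the derivative value
  have hcγ : cos c - cos a * cos b = sin a * sin b * cos (γ b) := by linarith
  have hnum : (-(-sin b * cos c)) * (sin b * sin c) -
      (cos a - cos b * cos c) * (cos b * sin c)
      = sin a * sin b * cos (γ b) * sin c := by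
    linear_combination sin c * cos c * hpb + sin c * hcγ
  rw [hnum] at hder
  convert hder using 1
  have hne : sin (γ b) * sin b ≠ 0 := by positivity
  field_simp
  ring_nf
  linear_combination (-cos (γ b)) * hsine
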